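/- Escape function: let r₀ ∈ [r_e, r_c] and let ε > 0 with r_e + ε < r_c − ε. There exists C > 0 such that, for the function E(r, ξ_r) = e^{C(r−r₀)²}·2μ(r)ξ_r, at every point (r, θ, ξ) with r ∈ [r_e + ε, r_c − ε], θ ∈ (0, π), q(r, θ, ξ) = 0, ξ ≠ 0, and ξ_t + (a/(r₀²+a²))ξ_φ = 0, one has r ≠ r₀ and the derivative of E along the Hamiltonian vector field of q, H_q E = e^{C(r−r₀)²}(2C(r−r₀)(2μ(r)ξ_r)² + H_q(2μ(r)ξ_r)), is nonzero with the same sign as r − r₀. -/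

import Mathlib

set_option maxHeartbeats 1000000


open Real

/-- The Hamiltonian vector field of `q` applied to a function `f` of
`(r, θ, ξ_r, ξ_θ)` (the variables `t, φ` are cyclic and `ξ_t, ξ_φ` are fixed
parameters): `H_q f = (∂_{ξ_r}q)∂_r f + (∂_{ξ_θ}q)∂_θ f − (∂_r q)∂_{ξ_r} f − (∂_θ q)∂_{ξ_θ} f`. -/
noncomputable def HamVF (q f : ℝ → ℝ → ℝ → ℝ → ℝ) (r θ ξr ξθ : ℝ) : ℝ :=
    (deriv (fun s => q r θ s ξθ) ξr)*(deriv (fun s => f s θ ξr ξθ) r)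
  + (deriv (fun s => q r θ ξr s) ξθ)*(deriv (fun s => f r s ξr ξθ) θ)
  - (deriv (fun s => q s θ ξr ξθ) r)*(deriv (fun s => f r θ s ξθ) ξr)
  - (deriv (fun s => q r s ξr ξθ) θ)*(deriv (fun s => f r θ ξr s) ξθ)

set_option maxHeartbeats 1000000

lemma phiPos (Λ rm rC re rc r r₀ : ℝ) (hΛ3 : 0 < Λ/3)
    (h1 : rm < rC) (h2 : 0 ≤ rC) (h3 : rC < re) (h4 : 0 < re)
    (h5 : re < r) (h6 : r < rc) (h7 : re ≤ r₀) (h8 : r₀ ≤ rc)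
    (hsum : rm + rC + re + rc = 0) :
    0 < 4*r*(-(Λ/3)*(r-rm)*(r-rC)*(r-re)*(r-rc))
      - (r^2 - r₀^2)*(-(Λ/3)*((r-rC)*(r-re)*(r-rc) + (r-rm)*(r-re)*(r-rc)
          + (r-rm)*(r-rC)*(r-rc) + (r-rm)*(r-rC)*(r-re))) := by
  have hr0 : 0 < r := lt_trans h4 h5
  have hA1 : 0 < r - rm := by linarith
  have hA2 : 0 < r - rC := by linarith
  have hA3 : 0 < r - re := by linarith
  have hA4 : 0 < rc - r := by linarith
  have hrc : 0 < rc := by linarith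
  have hr₀ : 0 < r₀ := by linarith
  set D : ℝ := -(Λ/3)*((r-rC)*(r-re)*(r-rc) + (r-rm)*(r-re)*(r-rc)
      + (r-rm)*(r-rC)*(r-rc) + (r-rm)*(r-rC)*(r-re)) with hD
  rcases le_or_gt D 0 with hDle | hDpos
  · -- Φ ≥ Φ(r, rc)
    have hc1 : 0 < (3*r - rc)*((r-rm)*(r-rC)*(r-re))
        + (rc^2 - r^2)*((r-rC)*(r-re) + (r-rm)*(r-re) + (r-rm)*(r-rC)) := by
      have hrc2 : 0 < rc^2 - r^2 := by nlinarith
      rcases le_or_gt rc (3*r) with h | h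
      · have t1 : 0 ≤ (3*r-rc)*((r-rm)*(r-rC)*(r-re)) :=
          mul_nonneg (by linarith) (mul_pos (mul_pos hA1 hA2) hA3).le
        have t2 : 0 < (rc^2-r^2)*((r-rC)*(r-re) + (r-rm)*(r-re) + (r-rm)*(r-rC)) := by
          apply mul_pos hrc2
          have := mul_pos hA2 hA3; have := mul_pos hA1 hA3; have := mul_pos hA1 hA2
          linarith
        linarith
      · have hP12 : 0 < (r-rm)*(r-rC) := mul_pos hA1 hA2
        have hQ : (rc-3*r)*(r-re) < (rc-r)*(rc+r) := by
          nlinarith [mul_pos hrc hA4, mul_pos h4 (show (0:ℝ) < rc-3*r by linarith), sq_nonneg r]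
        have h2' : (rc-3*r)*(r-re)*((r-rm)*(r-rC)) < (rc-r)*(rc+r)*((r-rm)*(r-rC)) :=
          mul_lt_mul_of_pos_right hQ hP12
        have t3 : 0 ≤ (rc^2-r^2)*((r-rC)*(r-re)) := mul_nonneg hrc2.le (mul_pos hA2 hA3).le
        have t4 : 0 ≤ (rc^2-r^2)*((r-rm)*(r-re)) := mul_nonneg hrc2.le (mul_pos hA1 hA3).le
        nlinarith [h2', t3, t4]
    have hPhic : 0 < 4*r*(-(Λ/3)*(r-rm)*(r-rC)*(r-re)*(r-rc)) - (r^2-rc^2)*D := by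
      have hpos := mul_pos (mul_pos hΛ3 hA4) hc1
      have heq : 4*r*(-(Λ/3)*(r-rm)*(r-rC)*(r-re)*(r-rc)) - (r^2-rc^2)*D
          = Λ/3*(rc-r)*((3*r - rc)*((r-rm)*(r-rC)*(r-re))
            + (rc^2 - r^2)*((r-rC)*(r-re) + (r-rm)*(r-re) + (r-rm)*(r-rC))) := by
        rw [hD]; ring
      rw [heq]; exact hpos
    have hmono : 0 ≤ (rc^2 - r₀^2)*(-D) := mul_nonneg (by nlinarith) (by linarith)
    linarith [hPhic, hmono]
  · -- Φ ≥ Φ(r, re)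
    have hc1 : 0 < 2*(r-re)*(rc-r)*(r-rC)*(r-rm)
        + (r+re)*(r-rm)*(rc-r)*(re-rC) + (r+re)*(r-re)*(r-rC)*(2*r+rC+re) := by
      have t1 : 0 < 2*(r-re)*(rc-r)*(r-rC)*(r-rm) := by
        have := mul_pos (mul_pos (mul_pos hA3 hA4) hA2) hA1; nlinarith [this]
      have t2 : 0 ≤ (r+re)*(r-rm)*(rc-r)*(re-rC) := by
        have := mul_pos (mul_pos (mul_pos (show (0:ℝ) < r+re by linarith) hA1) hA4)
          (show (0:ℝ) < re-rC by linarith)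
        linarith [this]
      have t3 : 0 ≤ (r+re)*(r-re)*(r-rC)*(2*r+rC+re) := by
        have := mul_pos (mul_pos (mul_pos (show (0:ℝ) < r+re by linarith) hA3) hA2)
          (show (0:ℝ) < 2*r+rC+re by linarith)
        linarith [this]
      linarith
    have hPhie : 0 < 4*r*(-(Λ/3)*(r-rm)*(r-rC)*(r-re)*(r-rc)) - (r^2-re^2)*D := by
      have hid : 4*r*(-(Λ/3)*(r-rm)*(r-rC)*(r-re)*(r-rc)) - (r^2-re^2)*D
          = Λ/3*((r-re)*(2*(r-re)*(rc-r)*(r-rC)*(r-rm)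
              + (r+re)*(r-rm)*(rc-r)*(re-rC) + (r+re)*(r-re)*(r-rC)*(2*r+rC+re)))
            + (Λ/3*(-(r^4) + re*r^3 + re^2*r^2 - re^3*r + rC*r^3 - rC*re*r^2
                - rC*re^2*r + rC*re^3))*(rm+rC+re+rc) := by
        rw [hD]; ring
      rw [hid, hsum, mul_zero, add_zero]
      exact mul_pos hΛ3 (mul_pos hA3 hc1)
    have hmono : 0 ≤ (r₀^2 - re^2)*D := mul_nonneg (by nlinarith) (by linarith)
    linarith [hPhie, hmono]


lemma rootFacts (Λ m a rm rC re rc : ℝ) (hΛ3 : 0 < Λ/3) (hm : 0 < m)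
    (ho1 : rm < rC) (ho2 : rC < re) (ho3 : re < rc)
    (hEq : ∀ x:ℝ, -(Λ/3)*x^4 + (1 - Λ*a^2/3)*x^2 - 2*m*x + a^2
      = -(Λ/3)*(x-rm)*(x-rC)*(x-re)*(x-rc)) :
    rm + rC + re + rc = 0 ∧ 0 ≤ rC ∧ 0 < re := by
  have he1' : Λ/3*(rm+rC+re+rc) = 0 := by
    linear_combination (-(1:ℝ)/12)*(hEq 2 - hEq (-2) - 2*(hEq 1) + 2*(hEq (-1)))
  have he1 : rm + rC + re + rc = 0 := by
    rcases mul_eq_zero.mp he1' with h | h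
    · exact absurd h (ne_of_gt hΛ3)
    · exact h
  have he3 : Λ/3*(rm*rC*re + rm*rC*rc + rm*re*rc + rC*re*rc) = -(2*m) := by
    linear_combination (-(1:ℝ)/12)*(8*(hEq 1 - hEq (-1)) - (hEq 2 - hEq (-2)))
  have he4 : a^2 = -(Λ/3)*(rm*rC*re*rc) := by linear_combination hEq 0
  have hrc : 0 < rc := by linarith
  have hrm : rm < 0 := by linarith
  have he3n : rm*rC*re + rm*rC*rc + rm*re*rc + rC*re*rc < 0 := by nlinarith [he3, hΛ3, hm]
  have hre : 0 < re := by
    by_contra h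
    push_neg at h
    have hfac : rm*rC*re + rm*rC*rc + rm*re*rc + rC*re*rc
        = -((rm+rC)*(rC+re)*(rm+re)) := by
      linear_combination (rm*rC + rm*re + rC*re)*he1
    have h1 : 0 < -(rm+rC) := by linarith
    have h2 : 0 < -(rC+re) := by linarith
    have h3 : 0 < -(rm+re) := by linarith
    nlinarith [mul_pos (mul_pos h1 h2) h3]
  have hrC : 0 ≤ rC := by
    by_contra h
    push_neg at h
    have h4 : 0 < rm*rC*re*rc :=
      mul_pos (mul_pos (mul_pos_of_neg_of_neg hrm h) hre) hrc
    nlinarith [he4, sq_nonneg a, mul_pos hΛ3 h4]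
  exact ⟨he1, hrC, hre⟩


/-- **escape function.** Let `r₀ ∈ [r_e, r_c]` and `ε > 0` with
`r_e + ε < r_c − ε`. There exists `C > 0` such that for
`E(r,ξ_r) = e^{C(r−r₀)²}·2μ(r)ξ_r`, at every point with `r ∈ [r_e+ε, r_c−ε]`,
`θ ∈ (0,π)`, `q = 0`, `ξ ≠ 0`, and `ξ_t + (a/(r₀²+a²))ξ_φ = 0`, one has `r ≠ r₀` and
`H_q E = e^{C(r−r₀)²}(2C(r−r₀)(2μ(r)ξ_r)² + H_q(2μ(r)ξ_r))` is nonzero with the same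
sign as `r − r₀`. -/
theorem escape_function
    (Λ m a rm rC re rc : ℝ) (hΛ : 0 < Λ) (hm : 0 < m)
    (μ : ℝ → ℝ)
    (hμ : ∀ r, μ r = -(Λ/3)*r^4 + (1 - Λ*a^2/3)*r^2 - 2*m*r + a^2)
    (hord : rm < rC ∧ rC < re ∧ re < rc)
    (hroots : ∀ r, μ r = -(Λ/3)*(r - rm)*(r - rC)*(r - re)*(r - rc))
    (b : ℝ) (hb : b = 1 + Λ*a^2/3)
    (c : ℝ → ℝ) (hc : ∀ θ, c θ = 1 + Λ*a^2/3*(cos θ)^2)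
    (r₀ : ℝ) (hr₀ : re ≤ r₀ ∧ r₀ ≤ rc)
    (q : ℝ → ℝ → ℝ → ℝ → ℝ → ℝ → ℝ)
    (hq : ∀ r θ ξt ξr ξφ ξθ, q r θ ξt ξr ξφ ξθ
      = μ r*ξr^2 + (b^2/(c θ*(sin θ)^2))*(a*(sin θ)^2*ξt + ξφ)^2
        - (b^2/μ r)*((r^2 + a^2)*ξt + a*ξφ)^2 + c θ*ξθ^2)
    (ε : ℝ) (hε : 0 < ε) (hεlt : re + ε < rc - ε) :
    ∃ C > (0:ℝ), ∀ r θ ξt ξr ξφ ξθ : ℝ,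
      re + ε ≤ r → r ≤ rc - ε → 0 < θ → θ < π →
      q r θ ξt ξr ξφ ξθ = 0 →
      (ξt, ξr, ξφ, ξθ) ≠ ((0:ℝ), (0:ℝ), (0:ℝ), (0:ℝ)) →
      ξt + (a/(r₀^2 + a^2))*ξφ = 0 →
      let qf : ℝ → ℝ → ℝ → ℝ → ℝ := fun r' θ' ξr' ξθ' => q r' θ' ξt ξr' ξφ ξθ'
      let E : ℝ → ℝ → ℝ → ℝ → ℝ := fun r' _ ξr' _ => exp (C*(r' - r₀)^2)*(2*μ r'*ξr')
      let HqE : ℝ := HamVF qf E r θ ξr ξθ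
      r ≠ r₀ ∧
      HqE = exp (C*(r - r₀)^2)*(2*C*(r - r₀)*(2*μ r*ξr)^2
        + HamVF qf (fun r' _ ξr' _ => 2*μ r'*ξr') r θ ξr ξθ) ∧
      (r < r₀ → HqE < 0) ∧ (r₀ < r → 0 < HqE) := by
  obtain ⟨ho1, ho2, ho3⟩ := hord
  have hΛ3 : 0 < Λ/3 := by linarith
  have hEq : ∀ x:ℝ, -(Λ/3)*x^4 + (1 - Λ*a^2/3)*x^2 - 2*m*x + a^2
      = -(Λ/3)*(x-rm)*(x-rC)*(x-re)*(x-rc) := fun x => (hμ x).symm.trans (hroots x)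
  obtain ⟨he1, hrC0, hre0⟩ := rootFacts Λ m a rm rC re rc hΛ3 hm ho1 ho2 ho3 hEq
  -- derivative of μ
  have hμd : ∀ x:ℝ, HasDerivAt μ (-(Λ/3)*((x-rC)*(x-re)*(x-rc) + (x-rm)*(x-re)*(x-rc)
      + (x-rm)*(x-rC)*(x-rc) + (x-rm)*(x-rC)*(x-re))) x := by
    intro x
    have hfun : μ = fun y => -(Λ/3)*(y-rm)*(y-rC)*(y-re)*(y-rc) := funext hroots
    have h1 : HasDerivAt (fun y:ℝ => y - rm) 1 x := (hasDerivAt_id x).sub_const rm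
    have h2 : HasDerivAt (fun y:ℝ => y - rC) 1 x := (hasDerivAt_id x).sub_const rC
    have h3 : HasDerivAt (fun y:ℝ => y - re) 1 x := (hasDerivAt_id x).sub_const re
    have h4 : HasDerivAt (fun y:ℝ => y - rc) 1 x := (hasDerivAt_id x).sub_const rc
    have h5 := (((h1.const_mul (-(Λ/3))).fun_mul h2).fun_mul h3).fun_mul h4
    rw [hfun]
    exact h5.congr_deriv (by ring)
  refine ⟨1, one_pos, ?_⟩
  intro r θ ξt ξr ξφ ξθ hr1 hr2 hθ1 hθ2 hq0 hξ hcon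
  intro qf E HqE
  have hqf : qf = fun r' θ' ξr' ξθ' => q r' θ' ξt ξr' ξφ ξθ' := rfl
  have hEdef : E = fun r' _ ξr' _ => exp (1*(r' - r₀)^2)*(2*μ r'*ξr') := rfl
  have hHqE : HqE = HamVF qf E r θ ξr ξθ := rfl
  -- point facts
  have hre_r : re < r := by linarith
  have hr_rc : r < rc := by linarith
  have hrpos : 0 < r := lt_trans hre0 hre_r
  have hr₀pos : 0 < r₀ := lt_of_lt_of_le hre0 hr₀.1
  have hμpos : 0 < μ r := by
    rw [hroots r]
    have h := mul_pos (mul_pos hΛ3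
      (mul_pos (mul_pos (show (0:ℝ) < r-rm by linarith) (show (0:ℝ) < r-rC by linarith))
        (show (0:ℝ) < r-re by linarith))) (show (0:ℝ) < rc-r by linarith)
    calc (0:ℝ) < Λ/3*((r-rm)*(r-rC)*(r-re))*(rc-r) := h
    _ = -(Λ/3)*(r-rm)*(r-rC)*(r-re)*(r-rc) := by ring
  have hμne : μ r ≠ 0 := ne_of_gt hμpos
  have hμinv : μ r * (μ r)⁻¹ = 1 := mul_inv_cancel₀ hμne
  have hsθ : 0 < sin θ := Real.sin_pos_of_pos_of_lt_pi hθ1 hθ2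
  have hcθ : 0 < c θ := by rw [hc]; positivity
  have hbpos : 0 < b := by rw [hb]; positivity
  have hden : 0 < c θ*(sin θ)^2 := mul_pos hcθ (pow_pos hsθ 2)
  have hr₀a : (0:ℝ) < r₀^2 + a^2 := by positivity
  have hinv2 : (r₀^2+a^2) * (r₀^2+a^2)⁻¹ = 1 := mul_inv_cancel₀ (ne_of_gt hr₀a)
  have hccon : (r₀^2 + a^2)*ξt + a*ξφ = 0 := by
    linear_combination (r₀^2+a^2)*hcon - (a*ξφ)*hinv2
  have hG : (r^2+a^2)*ξt + a*ξφ = (r^2 - r₀^2)*ξt := by linear_combination hccon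
  have hq0' := hq0
  rw [hq r θ ξt ξr ξφ ξθ, hG] at hq0'
  -- key relation from q = 0
  have hkey : μ r^2*ξr^2 + μ r*((b^2/(c θ*(sin θ)^2))*(a*(sin θ)^2*ξt + ξφ)^2 + c θ*ξθ^2)
      = b^2*((r^2 - r₀^2)*ξt)^2 := by
    linear_combination (μ r)*hq0' + (b^2*((r^2 - r₀^2)*ξt)^2)*hμinv
  have hAnn : 0 ≤ (b^2/(c θ*(sin θ)^2))*(a*(sin θ)^2*ξt + ξφ)^2 + c θ*ξθ^2 :=
    add_nonneg (mul_nonneg (div_nonneg (sq_nonneg b) hden.le) (sq_nonneg _))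
      (mul_nonneg hcθ.le (sq_nonneg ξθ))
  -- decomposition of Y = 0
  have hYcomp : ((b^2/(c θ*(sin θ)^2))*(a*(sin θ)^2*ξt + ξφ)^2 + c θ*ξθ^2 = 0) →
      (a*(sin θ)^2*ξt + ξφ = 0 ∧ ξθ = 0) := by
    intro hY0
    have hA1 : 0 ≤ (b^2/(c θ*(sin θ)^2))*(a*(sin θ)^2*ξt + ξφ)^2 :=
      mul_nonneg (div_nonneg (sq_nonneg b) hden.le) (sq_nonneg _)
    have hA2 : 0 ≤ c θ*ξθ^2 := mul_nonneg hcθ.le (sq_nonneg ξθ)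
    have hA3 : (b^2/(c θ*(sin θ)^2))*(a*(sin θ)^2*ξt + ξφ)^2 = 0 := by
      linarith only [hY0, hA1, hA2]
    have hA4 : c θ*ξθ^2 = 0 := by linarith only [hY0, hA1, hA2]
    constructor
    · have hb2 : b^2/(c θ*(sin θ)^2) ≠ 0 := ne_of_gt (div_pos (pow_pos hbpos 2) hden)
      have := (mul_eq_zero.mp hA3).resolve_left hb2
      exact (pow_eq_zero_iff two_ne_zero).mp this
    · have := (mul_eq_zero.mp hA4).resolve_left (ne_of_gt hcθ)
      exact (pow_eq_zero_iff two_ne_zero).mp this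
  -- all-zero contradiction helper
  have hallzero : ξr = 0 → ξt = 0 →
      ((b^2/(c θ*(sin θ)^2))*(a*(sin θ)^2*ξt + ξφ)^2 + c θ*ξθ^2 = 0) → False := by
    intro hξr0 hξt0 hY0
    obtain ⟨hA0, hξθ0⟩ := hYcomp hY0
    have hξφ0 : ξφ = 0 := by linear_combination hA0 - (a*(sin θ)^2)*hξt0
    exact hξ (by rw [hξt0, hξr0, hξφ0, hξθ0])
  -- r ≠ r₀
  have hrne : r ≠ r₀ := by
    intro hrr
    have h0 : b^2*((r^2 - r₀^2)*ξt)^2 = 0 := by rw [hrr]; ring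
    have hx1 : 0 ≤ μ r^2*ξr^2 := by positivity
    have hx2 : 0 ≤ μ r*((b^2/(c θ*(sin θ)^2))*(a*(sin θ)^2*ξt + ξφ)^2 + c θ*ξθ^2) :=
      mul_nonneg hμpos.le hAnn
    have hY0 : (b^2/(c θ*(sin θ)^2))*(a*(sin θ)^2*ξt + ξφ)^2 + c θ*ξθ^2 = 0 := by
      have hz : μ r*((b^2/(c θ*(sin θ)^2))*(a*(sin θ)^2*ξt + ξφ)^2 + c θ*ξθ^2) = 0 := by
        linarith only [hkey, h0, hx1, hx2]
      exact (mul_eq_zero.mp hz).resolve_left hμne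
    have hξr0 : ξr = 0 := by
      have hz : μ r^2*ξr^2 = 0 := by linarith only [hkey, h0, hx1, hx2]
      have := (mul_eq_zero.mp hz).resolve_left (pow_ne_zero 2 hμne)
      exact (pow_eq_zero_iff two_ne_zero).mp this
    obtain ⟨hA0, hξθ0⟩ := hYcomp hY0
    have hco : 0 < r₀^2 + a^2 - a^2*(sin θ)^2 := by
      have hsc : a^2*(sin θ)^2 = a^2 - (a*cos θ)^2 := by
        linear_combination a^2*(Real.sin_sq_add_cos_sq θ)
      rw [hsc]
      linarith only [sq_nonneg (a*cos θ), pow_pos hr₀pos 2]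
    have hprod : (r₀^2 + a^2 - a^2*(sin θ)^2)*ξt = 0 := by
      linear_combination hccon - a*hA0
    have hξt0 : ξt = 0 := (mul_eq_zero.mp hprod).resolve_left (ne_of_gt hco)
    exact hallzero hξr0 hξt0 hY0
  -- derivatives
  have hDr := hμd r
  set D : ℝ := -(Λ/3)*((r-rC)*(r-re)*(r-rc) + (r-rm)*(r-re)*(r-rc)
      + (r-rm)*(r-rC)*(r-rc) + (r-rm)*(r-rC)*(r-re)) with hDdef
  have hΦ : 0 < 4*r*μ r - (r^2 - r₀^2)*D := by
    rw [hroots r, hDdef]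
    exact phiPos Λ rm rC re rc r r₀ hΛ3 ho1 hrC0 ho2 hre0 hre_r hr_rc hr₀.1 hr₀.2 he1
  -- deriv in ξr of q
  have dq_ξr : deriv (fun s => q r θ ξt s ξφ ξθ) ξr = μ r*(2*ξr) := by
    have hf : (fun s => q r θ ξt s ξφ ξθ) = fun s => μ r*s^2
        + ((b^2/(c θ*(sin θ)^2))*(a*(sin θ)^2*ξt + ξφ)^2
          - (b^2/μ r)*((r^2 + a^2)*ξt + a*ξφ)^2 + c θ*ξθ^2) := by
      funext s
      rw [hq]; ring
    rw [hf]
    have h := ((hasDerivAt_pow 2 ξr).const_mul (μ r)).add_const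
      ((b^2/(c θ*(sin θ)^2))*(a*(sin θ)^2*ξt + ξφ)^2
        - (b^2/μ r)*((r^2 + a^2)*ξt + a*ξφ)^2 + c θ*ξθ^2)
    rw [h.deriv]
    push_cast
    ring
  -- deriv in r of q
  have dq_r : deriv (fun s => q s θ ξt ξr ξφ ξθ) r
      = D*ξr^2 - b^2*(4*r*((r^2-r₀^2)*ξt)*ξt*μ r - ((r^2-r₀^2)*ξt)^2*D)/μ r^2 := by
    have hf : (fun s => q s θ ξt ξr ξφ ξθ) = fun s => μ s*ξr^2
        + (b^2/(c θ*(sin θ)^2))*(a*(sin θ)^2*ξt + ξφ)^2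
        + (-(b^2)*((s^2 + a^2)*ξt + a*ξφ)^2)/(μ s) + c θ*ξθ^2 := by
      funext s
      rw [hq]; ring
    rw [hf]
    have hGd : HasDerivAt (fun s:ℝ => (s^2 + a^2)*ξt + a*ξφ) (2*r*ξt) r := by
      have h := (((hasDerivAt_pow 2 r).add_const (a^2)).mul_const ξt).add_const (a*ξφ)
      exact h.congr_deriv (by push_cast; ring)
    have hnum := (hGd.fun_pow 2).const_mul (-(b^2))
    have hdiv := hnum.fun_div (hμd r) hμne
    have hbig := (((hμd r).mul_const (ξr^2)).add_const
      ((b^2/(c θ*(sin θ)^2))*(a*(sin θ)^2*ξt + ξφ)^2)).fun_add hdiv |>.add_const (c θ*ξθ^2)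
    rw [hbig.deriv, ← hDdef, hG]
    field_simp
    ring
  -- derivs of E and u in r and ξr
  have hexp : HasDerivAt (fun s:ℝ => exp (1*(s - r₀)^2))
      (exp (1*(r - r₀)^2)*(2*(r-r₀))) r := by
    have hin : HasDerivAt (fun s:ℝ => 1*(s - r₀)^2) (2*(r-r₀)) r := by
      have h := (((hasDerivAt_id r).sub_const r₀).pow 2).const_mul 1
      exact h.congr_deriv (by simp only [id_eq]; push_cast; ring)
    exact hin.exp
  have hμ2 : HasDerivAt (fun s:ℝ => 2*μ s*ξr) (2*D*ξr) r := by
    have h := ((hμd r).const_mul 2).mul_const ξr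
    convert h using 1
  have dE_r : deriv (fun s => exp (1*(s - r₀)^2)*(2*μ s*ξr)) r
      = exp (1*(r - r₀)^2)*(2*(r-r₀))*(2*μ r*ξr) + exp (1*(r - r₀)^2)*(2*D*ξr) :=
    (hexp.mul hμ2).deriv
  have dE_ξr : deriv (fun s => exp (1*(r - r₀)^2)*(2*μ r*s)) ξr
      = exp (1*(r - r₀)^2)*(2*μ r) := by
    have h : HasDerivAt (fun s:ℝ => exp (1*(r - r₀)^2)*(2*μ r*s))
        (exp (1*(r - r₀)^2)*(2*μ r)) ξr := by
      have h0 := ((hasDerivAt_id ξr).const_mul (2*μ r)).const_mul (exp (1*(r - r₀)^2))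
      exact h0.congr_deriv (by ring)
    exact h.deriv
  have du_r : deriv (fun s => 2*μ s*ξr) r = 2*D*ξr := hμ2.deriv
  have du_ξr : deriv (fun s => 2*μ r*s) ξr = 2*μ r := by
    have h : HasDerivAt (fun s:ℝ => 2*μ r*s) (2*μ r) ξr := by
      have h0 := (hasDerivAt_id ξr).const_mul (2*μ r)
      exact h0.congr_deriv (by ring)
    exact h.deriv
  -- main identity
  have hESu : HamVF qf E r θ ξr ξθ = exp (1*(r - r₀)^2)*(2*1*(r - r₀)*(2*μ r*ξr)^2
      + HamVF qf (fun r' _ ξr' _ => 2*μ r'*ξr') r θ ξr ξθ) := by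
    simp only [hqf, hEdef, HamVF]
    rw [dq_ξr, dq_r, dE_r, dE_ξr, du_r, du_ξr]
    simp only [deriv_const']
    ring
  -- value of the u Hamiltonian derivative, cleared
  have hSval : HamVF qf (fun r' _ ξr' _ => 2*μ r'*ξr') r θ ξr ξθ
      = (2*μ r*ξr)*(2*D*ξr) - (D*ξr^2
        - b^2*(4*r*((r^2-r₀^2)*ξt)*ξt*μ r - ((r^2-r₀^2)*ξt)^2*D)/μ r^2)*(2*μ r) := by
    simp only [hqf, HamVF]
    rw [dq_ξr, dq_r, du_r, du_ξr]
    simp only [deriv_const']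
    ring
  -- the sign quantity
  have hsign : 0 < (r - r₀)*(2*1*(r - r₀)*(2*μ r*ξr)^2
      + HamVF qf (fun r' _ ξr' _ => 2*μ r'*ξr') r θ ξr ξθ) := by
    set Y : ℝ := (b^2/(c θ*(sin θ)^2))*(a*(sin θ)^2*ξt + ξφ)^2 + c θ*ξθ^2 with hYdef
    set H : ℝ := HamVF qf (fun r' _ ξr' _ => 2*μ r'*ξr') r θ ξr ξθ with hHdef
    have hSc : μ r * H
        = 4*μ r^2*D*ξr^2 - 2*(D*ξr^2*μ r^2
          - b^2*(4*r*((r^2-r₀^2)*ξt)*ξt*μ r - ((r^2-r₀^2)*ξt)^2*D)) := by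
      rw [hSval]
      field_simp
      ring
    have hfin : (r+r₀)*((r - r₀)*(2*1*(r - r₀)*(2*μ r*ξr)^2 + H))*μ r
        = 8*μ r^3*ξr^2*((r-r₀)^2*(r+r₀)+r)
          + 2*(4*r*μ r - (r^2-r₀^2)*D)*(μ r*Y) := by
      linear_combination ((r+r₀)*(r-r₀))*hSc - (2*(4*r*μ r - (r^2-r₀^2)*D))*hkey
    have hinner : 0 < (r-r₀)^2*(r+r₀)+r :=
      add_pos_of_nonneg_of_pos (by positivity) hrpos
    have hYnn : 0 ≤ μ r * Y := mul_nonneg hμpos.le hAnn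
    have hT : 0 < 8*μ r^3*ξr^2*((r-r₀)^2*(r+r₀)+r)
        + 2*(4*r*μ r - (r^2-r₀^2)*D)*(μ r*Y) := by
      rcases eq_or_lt_of_le hYnn with hY0 | hY0
      · -- μ Y = 0, then ξr ≠ 0
        have hYe : Y = 0 := by
          rcases mul_eq_zero.mp hY0.symm with h | h
          · exact absurd h hμne
          · exact h
        have hξrne : ξr ≠ 0 := by
          intro h0
          have hGG : b^2*((r^2 - r₀^2)*ξt)^2 = 0 := by
            rw [← hkey, h0, hYe]; ring
          have hr2 : r^2 - r₀^2 ≠ 0 := by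
            intro h
            have h' : (r - r₀)*(r + r₀) = 0 := by linear_combination h
            rcases mul_eq_zero.mp h' with h'' | h''
            · exact hrne (by linarith only [h''])
            · linarith only [h'', hrpos, hr₀pos]
          have hξt0 : ξt = 0 := by
            rcases mul_eq_zero.mp hGG with h | h
            · exact absurd h (pow_ne_zero 2 (ne_of_gt hbpos))
            · have := (pow_eq_zero_iff two_ne_zero).mp h
              exact (mul_eq_zero.mp this).resolve_left hr2
          exact hallzero h0 hξt0 hYe
        have hξr2 : 0 < ξr^2 := lt_of_le_of_ne (sq_nonneg ξr) (Ne.symm (pow_ne_zero 2 hξrne))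
        have hterm1 : 0 < 8*μ r^3*ξr^2*((r-r₀)^2*(r+r₀)+r) :=
          mul_pos (mul_pos (mul_pos (by norm_num) (pow_pos hμpos 3)) hξr2) hinner
        have hterm2 : 2*(4*r*μ r - (r^2-r₀^2)*D)*(μ r*Y) = 0 := by rw [← hY0]; ring
        linarith only [hterm1, hterm2]
      · have hterm1 : 0 ≤ 8*μ r^3*ξr^2*((r-r₀)^2*(r+r₀)+r) :=
          mul_nonneg (mul_nonneg (mul_nonneg (by norm_num) (pow_nonneg hμpos.le 3))
            (sq_nonneg ξr)) hinner.le
        have hterm2 : 0 < 2*(4*r*μ r - (r^2-r₀^2)*D)*(μ r*Y) :=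
          mul_pos (by linarith only [hΦ]) hY0
        linarith only [hterm1, hterm2]
    have hpos : 0 < (r+r₀)*((r - r₀)*(2*1*(r - r₀)*(2*μ r*ξr)^2 + H))*μ r := by
      rw [hfin]; exact hT
    have hrr₀ : 0 < (r+r₀)*μ r := mul_pos (by linarith only [hrpos, hr₀pos]) hμpos
    by_contra h'
    push_neg at h'
    have hle : ((r+r₀)*μ r)*((r - r₀)*(2*1*(r - r₀)*(2*μ r*ξr)^2 + H)) ≤ 0 :=
      mul_nonpos_iff.mpr (Or.inl ⟨hrr₀.le, h'⟩)
    have heq2 : ((r+r₀)*μ r)*((r - r₀)*(2*1*(r - r₀)*(2*μ r*ξr)^2 + H))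
        = (r+r₀)*((r - r₀)*(2*1*(r - r₀)*(2*μ r*ξr)^2 + H))*μ r := by ring
    rw [heq2] at hle
    linarith only [hle, hpos]
  refine ⟨hrne, by rw [hHqE]; exact hESu, ?_, ?_⟩
  · intro hlt
    have hS : (2*1*(r - r₀)*(2*μ r*ξr)^2
        + HamVF qf (fun r' _ ξr' _ => 2*μ r'*ξr') r θ ξr ξθ) < 0 := by
      by_contra h'
      push_neg at h'
      have hle : (r - r₀)*(2*1*(r - r₀)*(2*μ r*ξr)^2
          + HamVF qf (fun r' _ ξr' _ => 2*μ r'*ξr') r θ ξr ξθ) ≤ 0 :=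
        mul_nonpos_iff.mpr (Or.inr ⟨by linarith only [hlt], h'⟩)
      linarith only [hle, hsign]
    rw [hHqE, hESu]
    exact mul_neg_of_pos_of_neg (exp_pos _) hS
  · intro hlt
    have hS : 0 < (2*1*(r - r₀)*(2*μ r*ξr)^2
        + HamVF qf (fun r' _ ξr' _ => 2*μ r'*ξr') r θ ξr ξθ) := by
      by_contra h'
      push_neg at h'
      have hle : (r - r₀)*(2*1*(r - r₀)*(2*μ r*ξr)^2
          + HamVF qf (fun r' _ ξr' _ => 2*μ r'*ξr') r θ ξr ξθ) ≤ 0 :=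
        mul_nonpos_iff.mpr (Or.inl ⟨by linarith only [hlt], h'⟩)
      linarith only [hle, hsign]
    rw [hHqE, hESu]
    exact mul_pos (exp_pos _) hS
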